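/- arXiv:1312.1652 — 2 statements merged into one kernel-verified Lean document; each statement's English description precedes it below -/
import Mathlib

section
/- Fractional Nash inequality: there exists C > 0 (depending on d and α) such that for every g ∈ L¹(ℝ^d) with finite Gagliardo seminorm of order α/2, one has ∫_{ℝ^d} |g(x)|² dx ≤ C (∫_{ℝ^d} |g(x)| dx)^{2α/(d+α)} (∫_{ℝ^d} ∫_{ℝ^d} |g(x)-g(y)|²/|x-y|^{d+α} dy dx)^{d/(d+α)}. -/
open MeasureTheory Real Set Filter Topology

private lemma opt_bound (dd αα a b X : ℝ) (hdd : 0 < dd) (hαα : 0 < αα) (ha : 0 ≤ a) (hb : 0 ≤ b)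
    (h : ∀ r : ℝ, 0 < r → X ≤ a * r ^ αα + b / r ^ dd) :
    X ≤ 2 * a ^ (dd / (dd + αα)) * b ^ (αα / (dd + αα)) := by
  have hs : 0 < dd + αα := by linarith
  rcases eq_or_lt_of_le ha with ha0 | hapos
  · have hX : X ≤ 0 := by
      have htend : Tendsto (fun r : ℝ => b * r ^ (-dd)) atTop (𝓝 (b * 0)) :=
        (tendsto_rpow_neg_atTop hdd).const_mul b
      rw [mul_zero] at htend
      refine ge_of_tendsto htend ?_
      filter_upwards [eventually_gt_atTop 0] with r hr
      have h' := h r hr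
      rw [← ha0, zero_mul, zero_add] at h'
      rwa [rpow_neg hr.le, ← div_eq_mul_inv]
    calc X ≤ 0 := hX
      _ ≤ _ := by positivity
  · rcases eq_or_lt_of_le hb with hb0 | hbpos
    · have hX : X ≤ 0 := by
        have hc : Tendsto (fun r : ℝ => a * r ^ αα) (𝓝[>] 0) (𝓝 (a * (0:ℝ) ^ αα)) :=
          (((Real.continuousAt_rpow_const 0 αα (Or.inr hαα.le)).tendsto).mono_left
            nhdsWithin_le_nhds).const_mul a
        rw [Real.zero_rpow hαα.ne', mul_zero] at hc
        refine ge_of_tendsto hc ?_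
        filter_upwards [self_mem_nhdsWithin] with r hr
        have h' := h r hr
        rwa [← hb0, zero_div, add_zero] at h'
      calc X ≤ 0 := hX
        _ ≤ _ := by positivity
    · set r : ℝ := (b / a) ^ ((dd + αα)⁻¹) with hrdef
      have hba : 0 < b / a := div_pos hbpos hapos
      have hrpos : 0 < r := rpow_pos_of_pos hba _
      have h1 : r ^ αα = (b / a) ^ (αα / (dd + αα)) := by
        rw [hrdef, ← rpow_mul hba.le, inv_mul_eq_div]
      have h2 : r ^ dd = (b / a) ^ (dd / (dd + αα)) := by
        rw [hrdef, ← rpow_mul hba.le, inv_mul_eq_div]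
      have ht : dd / (dd + αα) = 1 - αα / (dd + αα) := by field_simp; ring
      have ht' : αα / (dd + αα) = 1 - dd / (dd + αα) := by field_simp; ring
      have e1 : a * r ^ αα = a ^ (dd / (dd + αα)) * b ^ (αα / (dd + αα)) := by
        rw [h1, div_rpow hb hapos.le, ht, rpow_sub hapos, rpow_one]; ring
      have e2 : b / r ^ dd = a ^ (dd / (dd + αα)) * b ^ (αα / (dd + αα)) := by
        rw [h2, div_rpow hb hapos.le, div_div_eq_mul_div, ht', rpow_sub hbpos, rpow_one]; ring
      have h' := h r hrpos
      rw [e1, e2] at h'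
      linarith

theorem stmt6 (d : ℕ) (hd : 1 ≤ d) (α : ℝ) (hα : α ∈ Set.Ioo (0:ℝ) 2) :
    ∃ C > (0 : ℝ), ∀ g : EuclideanSpace ℝ (Fin d) → ℝ,
      Integrable g → MemLp g 2 (volume : Measure (EuclideanSpace ℝ (Fin d))) →
      Integrable (fun p : EuclideanSpace ℝ (Fin d) × EuclideanSpace ℝ (Fin d) =>
        |g p.1 - g p.2| ^ 2 / ‖p.1 - p.2‖ ^ ((d : ℝ) + α)) →
      (∫ x, |g x| ^ 2) ≤
        C * (∫ x, |g x|) ^ (2 * α / ((d : ℝ) + α)) *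
          (∫ x, ∫ y, |g x - g y| ^ 2 / ‖x - y‖ ^ ((d : ℝ) + α)) ^ ((d : ℝ) / ((d : ℝ) + α)) := by
  have hα0 : 0 < α := hα.1
  have hdpos : (0:ℝ) < d := by exact_mod_cast hd
  have hdα : (0:ℝ) < (d:ℝ) + α := by linarith
  haveI : Nontrivial (EuclideanSpace ℝ (Fin d)) := by
    refine Module.nontrivial_of_finrank_pos (R := ℝ) (M := EuclideanSpace ℝ (Fin d)) ?_
    rw [finrank_euclideanSpace_fin]; omega
  set μ : Measure (EuclideanSpace ℝ (Fin d)) := volume with hμdef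
  set c1 : ℝ := (μ (Metric.ball (0 : EuclideanSpace ℝ (Fin d)) 1)).toReal with hc1def
  have hc1pos : 0 < c1 := by
    rw [hc1def]
    exact ENNReal.toReal_pos (Metric.measure_ball_pos μ _ one_pos).ne' measure_ball_lt_top.ne
  refine ⟨2 * (1/(2*c1)) ^ ((d:ℝ)/((d:ℝ)+α)) * (1/c1) ^ (α/((d:ℝ)+α)), by positivity, ?_⟩
  intro g hg1 hg2 hgF
  set F : EuclideanSpace ℝ (Fin d) × EuclideanSpace ℝ (Fin d) → ℝ :=
    fun p => |g p.1 - g p.2| ^ 2 / ‖p.1 - p.2‖ ^ ((d : ℝ) + α) with hFdef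
  have hF : Integrable F (μ.prod μ) := hgF
  set J : ℝ := ∫ p, F p ∂(μ.prod μ) with hJdef
  have hJ0 : 0 ≤ J := integral_nonneg fun p => by positivity
  set A : ℝ := ∫ x, |g x| ∂μ with hAdef
  have hA0 : 0 ≤ A := integral_nonneg fun x => abs_nonneg _
  set X : ℝ := ∫ x, g x ^ 2 ∂μ with hXdef
  -- the key inequality for each r > 0
  have key : ∀ r : ℝ, 0 < r → X ≤ (J/(2*c1)) * r ^ α + (A^2/c1) / r ^ (d:ℝ) := by
    intro r hr
    set S : Set (EuclideanSpace ℝ (Fin d) × EuclideanSpace ℝ (Fin d)) :=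
      {p | dist p.1 p.2 < r} with hSdef
    have hS : MeasurableSet S :=
      (isOpen_lt (continuous_fst.dist continuous_snd) continuous_const).measurableSet
    have hSsymm : ∀ p : EuclideanSpace ℝ (Fin d) × EuclideanSpace ℝ (Fin d),
        p.swap ∈ S ↔ p ∈ S := by
      intro p; simp only [hSdef, Set.mem_setOf_eq, Prod.fst_swap, Prod.snd_swap, dist_comm]
    have hgm := hg1.aestronglyMeasurable
    have hgm1 : AEStronglyMeasurable (fun p : EuclideanSpace ℝ (Fin d) × EuclideanSpace ℝ (Fin d)
        => g p.1) (μ.prod μ) :=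
      hgm.comp_quasiMeasurePreserving Measure.quasiMeasurePreserving_fst
    have hgm2 : AEStronglyMeasurable (fun p : EuclideanSpace ℝ (Fin d) × EuclideanSpace ℝ (Fin d)
        => g p.2) (μ.prod μ) :=
      hgm.comp_quasiMeasurePreserving Measure.quasiMeasurePreserving_snd
    set f1 := S.indicator (fun p : EuclideanSpace ℝ (Fin d) × EuclideanSpace ℝ (Fin d) =>
      g p.1 ^ 2) with hf1def
    set f2 := S.indicator (fun p : EuclideanSpace ℝ (Fin d) × EuclideanSpace ℝ (Fin d) =>
      g p.1 * g p.2) with hf2def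
    set f3 := S.indicator (fun p : EuclideanSpace ℝ (Fin d) × EuclideanSpace ℝ (Fin d) =>
      (g p.1 - g p.2) ^ 2) with hf3def
    set f4 := S.indicator (fun p : EuclideanSpace ℝ (Fin d) × EuclideanSpace ℝ (Fin d) =>
      g p.1 * (g p.1 - g p.2)) with hf4def
    -- pointwise bounds
    have hf3nonneg : ∀ p, 0 ≤ f3 p := fun p => Set.indicator_nonneg (fun q _ => sq_nonneg _) p
    have hpt34 : ∀ p, f3 p ≤ r ^ ((d:ℝ)+α) * F p := by
      intro p
      by_cases hp : p ∈ S
      · rw [hf3def, Set.indicator_of_mem hp]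
        rcases eq_or_ne p.1 p.2 with he | hne
        · rw [he, sub_self]
          have : (0:ℝ) ≤ F p := by rw [hFdef]; positivity
          simpa using by positivity
        · have hnorm : 0 < ‖p.1 - p.2‖ := by
            rw [norm_pos_iff]; exact sub_ne_zero_of_ne hne
          have hnp : 0 < ‖p.1 - p.2‖ ^ ((d:ℝ)+α) := rpow_pos_of_pos hnorm _
          have hlt : ‖p.1 - p.2‖ ^ ((d:ℝ)+α) ≤ r ^ ((d:ℝ)+α) := by
            refine rpow_le_rpow (norm_nonneg _) ?_ hdα.le
            have := hp
            rw [hSdef, Set.mem_setOf_eq, dist_eq_norm] at this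
            exact this.le
          have hFval : F p = |g p.1 - g p.2| ^ 2 / ‖p.1 - p.2‖ ^ ((d:ℝ)+α) := rfl
          rw [hFval, ← sq_abs (g p.1 - g p.2)]
          rw [show r ^ ((d:ℝ)+α) * (|g p.1 - g p.2| ^ 2 / ‖p.1 - p.2‖ ^ ((d:ℝ)+α))
              = |g p.1 - g p.2| ^ 2 * (r ^ ((d:ℝ)+α) / ‖p.1 - p.2‖ ^ ((d:ℝ)+α)) from by ring]
          nth_rewrite 1 [show |g p.1 - g p.2| ^ 2 = |g p.1 - g p.2| ^ 2 * 1 from by ring]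
          exact mul_le_mul_of_nonneg_left ((one_le_div hnp).2 hlt) (by positivity)
      · rw [hf3def, Set.indicator_of_notMem hp]
        have : (0:ℝ) ≤ F p := by rw [hFdef]; positivity
        positivity
    have hpt2 : ∀ p, f2 p ≤ |g p.1| * |g p.2| := by
      intro p
      by_cases hp : p ∈ S
      · rw [hf2def, Set.indicator_of_mem hp]
        exact (le_abs_self _).trans_eq (abs_mul _ _)
      · rw [hf2def, Set.indicator_of_notMem hp]; positivity
    -- integrability
    have hFc : Integrable (fun p => r ^ ((d:ℝ)+α) * F p) (μ.prod μ) := hF.const_mul _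
    have h3m : AEStronglyMeasurable (fun p : EuclideanSpace ℝ (Fin d) × EuclideanSpace ℝ (Fin d)
        => (g p.1 - g p.2) ^ 2) (μ.prod μ) := by
      simp only [pow_two]; exact (hgm1.sub hgm2).mul (hgm1.sub hgm2)
    have hf3 : Integrable f3 (μ.prod μ) := by
      refine Integrable.mono' hFc (h3m.indicator hS) (Eventually.of_forall fun p => ?_)
      rw [Real.norm_eq_abs, abs_of_nonneg (hf3nonneg p)]
      exact hpt34 p
    have hf2 : Integrable f2 (μ.prod μ) := (hg1.mul_prod hg1).indicator hS
    have h1m : AEStronglyMeasurable (fun p : EuclideanSpace ℝ (Fin d) × EuclideanSpace ℝ (Fin d)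
        => g p.1 ^ 2) (μ.prod μ) := by
      simp only [pow_two]; exact hgm1.mul hgm1
    have hslice : ∀ x : EuclideanSpace ℝ (Fin d),
        (fun y => f1 (x, y)) = (Metric.ball x r).indicator (fun _ => g x ^ 2) := by
      intro x
      funext y
      by_cases hxy : dist x y < r
      · have h1 : (x, y) ∈ S := hxy
        have h2 : y ∈ Metric.ball x r := by rwa [Metric.mem_ball, dist_comm]
        rw [hf1def, Set.indicator_of_mem h1, Set.indicator_of_mem h2]
      · have h1 : (x, y) ∉ S := hxy
        have h2 : y ∉ Metric.ball x r := by rw [Metric.mem_ball, dist_comm]; exact hxy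
        rw [hf1def, Set.indicator_of_notMem h1, Set.indicator_of_notMem h2]
    have hballval : ∀ x : EuclideanSpace ℝ (Fin d),
        (μ (Metric.ball x r)).toReal = r ^ ((d:ℝ)) * c1 := by
      intro x
      rw [hμdef, Measure.addHaar_ball volume x hr.le, ENNReal.toReal_mul,
        ENNReal.toReal_ofReal (by positivity), finrank_euclideanSpace_fin, hc1def, hμdef,
        ← Real.rpow_natCast r d]
    have hinner : ∀ x : EuclideanSpace ℝ (Fin d),
        ∫ y, f1 (x, y) ∂μ = (r ^ ((d:ℝ)) * c1) * g x ^ 2 := by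
      intro x
      rw [hslice x, integral_indicator measurableSet_ball, setIntegral_const, measureReal_def, hballval x,
        smul_eq_mul]
    have hf1 : Integrable f1 (μ.prod μ) := by
      refine (integrable_prod_iff (h1m.indicator hS)).2 ⟨?_, ?_⟩
      · refine Eventually.of_forall fun x => ?_
        rw [hslice x]
        exact (integrableOn_const measure_ball_lt_top.ne).integrable_indicator
          measurableSet_ball
      · have heq : (fun x => ∫ y, ‖f1 (x, y)‖ ∂μ) = fun x => (r ^ ((d:ℝ)) * c1) * g x ^ 2 := by
          funext x
          have : (fun y => ‖f1 (x, y)‖) = fun y => f1 (x, y) := by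
            funext y
            rw [Real.norm_eq_abs, abs_of_nonneg]
            exact Set.indicator_nonneg (fun q _ => sq_nonneg _) _
          rw [this, hinner x]
        rw [heq]
        exact (hg2.integrable_sq).const_mul _
    have hf14 : ∀ p, f1 p = f4 p + f2 p := by
      intro p
      by_cases hp : p ∈ S
      · simp only [hf1def, hf2def, hf4def, Set.indicator_of_mem hp]; ring
      · simp [hf1def, hf2def, hf4def, Set.indicator_of_notMem hp]
    have hf4 : Integrable f4 (μ.prod μ) := by
      have : f4 = fun p => f1 p - f2 p := by
        funext p; rw [hf14 p]; ring
      rw [this]; exact hf1.sub hf2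
    -- integral identities
    have I1a : (∫ x, ∫ y, f1 (x, y) ∂μ ∂μ) = ∫ p, f1 p ∂(μ.prod μ) := integral_integral hf1
    have I1 : ∫ p, f1 p ∂(μ.prod μ) = (r ^ ((d:ℝ)) * c1) * X := by
      rw [← I1a]
      calc (∫ x, ∫ y, f1 (x, y) ∂μ ∂μ) = ∫ x, (r ^ ((d:ℝ)) * c1) * g x ^ 2 ∂μ := by
            refine integral_congr_ae (Eventually.of_forall fun x => ?_)
            exact hinner x
        _ = (r ^ ((d:ℝ)) * c1) * X := by rw [hXdef, integral_const_mul]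
    have I2 : ∫ p, f2 p ∂(μ.prod μ) ≤ A ^ 2 := by
      calc ∫ p, f2 p ∂(μ.prod μ) ≤ ∫ p, |g p.1| * |g p.2| ∂(μ.prod μ) :=
            integral_mono hf2 (hg1.abs.mul_prod hg1.abs) hpt2
        _ = (∫ x, |g x| ∂μ) * (∫ y, |g y| ∂μ) := integral_prod_mul (fun x => |g x|) (fun y => |g y|)
        _ = A ^ 2 := by rw [hAdef]; ring
    have hptsum : ∀ p : EuclideanSpace ℝ (Fin d) × EuclideanSpace ℝ (Fin d),
        f4 p + f4 p.swap = f3 p := by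
      intro p
      by_cases hp : p ∈ S
      · have hp' : p.swap ∈ S := (hSsymm p).2 hp
        simp only [hf3def, hf4def, Set.indicator_of_mem hp, Set.indicator_of_mem hp',
          Prod.fst_swap, Prod.snd_swap]
        ring
      · have hp' : p.swap ∉ S := fun h => hp ((hSsymm p).1 h)
        simp [hf3def, hf4def, Set.indicator_of_notMem hp, Set.indicator_of_notMem hp']
    have hf4swap : Integrable (fun p => f4 p.swap) (μ.prod μ) := by
      have : (fun p : EuclideanSpace ℝ (Fin d) × EuclideanSpace ℝ (Fin d) => f4 p.swap)
          = fun p => f3 p - f4 p := by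
        funext p; rw [← hptsum p]; ring
      rw [this]; exact hf3.sub hf4
    have I4 : 2 * ∫ p, f4 p ∂(μ.prod μ) = ∫ p, f3 p ∂(μ.prod μ) := by
      have hswap : ∫ p, f4 p ∂(μ.prod μ) = ∫ p, f4 p.swap ∂(μ.prod μ) :=
        (integral_prod_swap f4).symm
      calc 2 * ∫ p, f4 p ∂(μ.prod μ)
          = (∫ p, f4 p ∂(μ.prod μ)) + ∫ p, f4 p.swap ∂(μ.prod μ) := by rw [← hswap]; ring
        _ = ∫ p, (f4 p + f4 p.swap) ∂(μ.prod μ) := (integral_add hf4 hf4swap).symm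
        _ = ∫ p, f3 p ∂(μ.prod μ) := integral_congr_ae (Eventually.of_forall hptsum)
    have I3 : ∫ p, f3 p ∂(μ.prod μ) ≤ r ^ ((d:ℝ)+α) * J := by
      calc ∫ p, f3 p ∂(μ.prod μ) ≤ ∫ p, r ^ ((d:ℝ)+α) * F p ∂(μ.prod μ) :=
            integral_mono hf3 hFc hpt34
        _ = r ^ ((d:ℝ)+α) * J := by rw [hJdef, integral_const_mul]
    have hdecomp : ∫ p, f1 p ∂(μ.prod μ)
        = (∫ p, f4 p ∂(μ.prod μ)) + ∫ p, f2 p ∂(μ.prod μ) := by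
      rw [← integral_add hf4 hf2]
      exact integral_congr_ae (Eventually.of_forall hf14)
    -- combine
    have hcomb : (r ^ ((d:ℝ)) * c1) * X ≤ r ^ ((d:ℝ)+α) * J / 2 + A ^ 2 := by
      have h4le : ∫ p, f4 p ∂(μ.prod μ) ≤ r ^ ((d:ℝ)+α) * J / 2 := by
        have := I4
        linarith [I3]
      rw [← I1, hdecomp]
      linarith [I2]
    have hu : (0:ℝ) < r ^ ((d:ℝ)) := rpow_pos_of_pos hr _
    have hv : (0:ℝ) < r ^ α := rpow_pos_of_pos hr _
    have huv : r ^ ((d:ℝ)+α) = r ^ ((d:ℝ)) * r ^ α := rpow_add hr _ _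
    rw [huv] at hcomb
    have h2 : X ≤ (r ^ ((d:ℝ)) * r ^ α * J / 2 + A ^ 2) / (r ^ ((d:ℝ)) * c1) := by
      rw [le_div_iff₀ (by positivity)]
      nlinarith [hcomb]
    refine h2.trans_eq ?_
    field_simp
  -- apply the optimization lemma
  have main := opt_bound (d:ℝ) α (J/(2*c1)) (A^2/c1) X hdpos hα0
    (by positivity) (by positivity) key
  -- rewrite the statement integrals
  have hLHS : (∫ x, |g x| ^ 2 ∂(volume : Measure (EuclideanSpace ℝ (Fin d)))) = X := by
    rw [hXdef]
    exact integral_congr_ae (Eventually.of_forall fun x => sq_abs (g x))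
  have hJit : (∫ x, ∫ y, |g x - g y| ^ 2 / ‖x - y‖ ^ ((d : ℝ) + α)
      ∂(volume : Measure (EuclideanSpace ℝ (Fin d)))
      ∂(volume : Measure (EuclideanSpace ℝ (Fin d)))) = J := by
    rw [hJdef]
    exact integral_integral hF
  rw [hLHS, hJit]
  refine main.trans ?_
  have e1 : (J/(2*c1)) ^ ((d:ℝ)/((d:ℝ)+α))
      = (1/(2*c1)) ^ ((d:ℝ)/((d:ℝ)+α)) * J ^ ((d:ℝ)/((d:ℝ)+α)) := by
    rw [show J/(2*c1) = (1/(2*c1)) * J from by ring, mul_rpow (by positivity) hJ0]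
  have e2 : (A^2/c1) ^ (α/((d:ℝ)+α)) = (1/c1) ^ (α/((d:ℝ)+α)) * A ^ (2*α/((d:ℝ)+α)) := by
    rw [show A^2/c1 = (1/c1) * A^2 from by ring, mul_rpow (by positivity) (by positivity),
      ← Real.rpow_natCast A 2, ← Real.rpow_mul hA0]
    norm_num [mul_div_assoc]
  rw [e1, e2]
  apply le_of_eq
  ring
end

section
/- Weighted L² coercivity splitting: let m₀(x) = (1+|x|²)^{k₀/2} with 0 < k₀ < 1, α ∈ (0,2), and f : ℝ^d → ℝ measurable with finite weighted Gagliardo seminorm. Then ∫∫_{|x-y|≤1} |f(x)-f(y)|²/|x-y|^{d+α} m₀²(x) dy dx ≥ (1/2) ∫∫_{ℝ^d×ℝ^d} |f(x)m₀(x)-f(y)m₀(y)|²/|x-y|^{d+α} dy dx - C ∫ f² m₀², for a constant C depending only on d, α, k₀. -/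
open MeasureTheory Real Set

section AuxStmt17
variable {d : ℕ}

local notation "E" => EuclideanSpace ℝ (Fin d)


lemma phi_fin {s : ℝ} (hs : -(d:ℝ) < s) :
    ∫⁻ z : E in Metric.closedBall 0 1,
      ENNReal.ofReal (‖z‖ ^ s) < ⊤ := by
  rcases le_or_gt 0 s with hs0 | hs0
  · calc ∫⁻ z : E in Metric.closedBall 0 1, ENNReal.ofReal (‖z‖ ^ s)
        ≤ ∫⁻ _z : E in Metric.closedBall 0 1, 1 := by
          refine setLIntegral_mono' measurableSet_closedBall fun z hz => ?_
          simp only [mem_closedBall_zero_iff] at hz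
          exact ENNReal.ofReal_le_one.mpr (Real.rpow_le_one (norm_nonneg _) hz hs0)
      _ = volume (Metric.closedBall (0:E) 1) := by simp
      _ < ⊤ := measure_closedBall_lt_top
  · set a : ℝ := (1/2 : ℝ) with ha
    have ha0 : (0:ℝ) < a := by norm_num
    have ha1 : a < 1 := by norm_num
    set A : ℕ → Set E := fun n => {z : E | a ^ (n+1) < ‖z‖ ∧ ‖z‖ ≤ a ^ n} with hA
    have hcover : Metric.closedBall (0:E) 1 ⊆ {(0:E)} ∪ ⋃ n, A n := by
      intro z hz
      simp only [mem_closedBall_zero_iff] at hz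
      rcases eq_or_ne z 0 with rfl | hz0
      · exact Or.inl rfl
      · right
        have hzpos : 0 < ‖z‖ := norm_pos_iff.mpr hz0
        have hex : ∃ n : ℕ, a ^ n < ‖z‖ := exists_pow_lt_of_lt_one hzpos ha1
        classical
        set n₀ := Nat.find hex with hn₀
        have h1 : a ^ n₀ < ‖z‖ := Nat.find_spec hex
        have hne : n₀ ≠ 0 := by
          intro h
          rw [h] at h1
          simp only [pow_zero] at h1
          exact absurd hz (not_le.mpr h1)
        obtain ⟨m, hm⟩ := Nat.exists_eq_succ_of_ne_zero hne
        have h2 : ¬ (a ^ m < ‖z‖) := Nat.find_min hex (by omega)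
        refine mem_iUnion.mpr ⟨m, ?_, not_lt.mp h2⟩
        rw [← Nat.succ_eq_add_one, ← hm]; exact h1
    have hzero : ∫⁻ z : E in {(0:E)}, ENNReal.ofReal (‖z‖ ^ s) = 0 := by
      refine le_antisymm ?_ zero_le
      calc ∫⁻ z : E in {(0:E)}, ENNReal.ofReal (‖z‖ ^ s)
          ≤ ∫⁻ _z : E in {(0:E)}, 0 := by
            refine setLIntegral_mono' (measurableSet_singleton _) fun z hz => ?_
            rw [mem_singleton_iff] at hz; subst hz
            simp [Real.zero_rpow (ne_of_lt hs0)]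
        _ = 0 := by simp
    have hfr : Module.finrank ℝ E = d := finrank_euclideanSpace_fin
    set K := volume (Metric.closedBall (0:E) 1) with hK
    have hKlt : K < ⊤ := measure_closedBall_lt_top
    have hAn : ∀ n : ℕ, ∫⁻ z : E in A n, ENNReal.ofReal (‖z‖ ^ s)
        ≤ ENNReal.ofReal ((a ^ (n+1) : ℝ) ^ s) * (ENNReal.ofReal ((a ^ n : ℝ) ^ (d:ℕ)) * K) := by
      intro n
      have hAm : MeasurableSet (A n) := by
        apply MeasurableSet.inter
        · exact measurableSet_lt measurable_const measurable_norm
        · exact measurableSet_le measurable_norm measurable_const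
      calc ∫⁻ z : E in A n, ENNReal.ofReal (‖z‖ ^ s)
          ≤ ∫⁻ _z : E in A n, ENNReal.ofReal ((a ^ (n+1) : ℝ) ^ s) := by
            refine setLIntegral_mono' hAm fun z hz => ?_
            refine ENNReal.ofReal_le_ofReal ?_
            exact Real.rpow_le_rpow_of_nonpos (pow_pos ha0 _) (le_of_lt hz.1) hs0.le
        _ = ENNReal.ofReal ((a ^ (n+1) : ℝ) ^ s) * volume (A n) := by
            rw [setLIntegral_const]
        _ ≤ ENNReal.ofReal ((a ^ (n+1) : ℝ) ^ s) * (ENNReal.ofReal ((a ^ n : ℝ) ^ (d:ℕ)) * K) := by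
            gcongr
            have hsub : A n ⊆ Metric.closedBall (0:E) (a ^ n) := fun z hz => by
              rw [mem_closedBall_zero_iff]; exact hz.2
            refine (measure_mono hsub).trans ?_
            rw [Measure.addHaar_closedBall _ _ (by positivity : (0:ℝ) ≤ a ^ n), hfr]
            exact mul_le_mul_right (measure_mono Metric.ball_subset_closedBall) _
    have key : ∫⁻ z : E in Metric.closedBall 0 1, ENNReal.ofReal (‖z‖ ^ s)
        ≤ ∑' n : ℕ, ENNReal.ofReal ((a ^ (n+1) : ℝ) ^ s) * (ENNReal.ofReal ((a ^ n : ℝ) ^ (d:ℕ)) * K) := by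
      calc ∫⁻ z : E in Metric.closedBall 0 1, ENNReal.ofReal (‖z‖ ^ s)
          ≤ ∫⁻ z : E in {(0:E)} ∪ ⋃ n, A n, ENNReal.ofReal (‖z‖ ^ s) :=
            lintegral_mono_set hcover
        _ ≤ (∫⁻ z : E in {(0:E)}, ENNReal.ofReal (‖z‖ ^ s))
            + ∫⁻ z : E in ⋃ n, A n, ENNReal.ofReal (‖z‖ ^ s) := lintegral_union_le _ _ _
        _ ≤ 0 + ∑' n : ℕ, ∫⁻ z : E in A n, ENNReal.ofReal (‖z‖ ^ s) := by
            rw [hzero]; gcongr; exact lintegral_iUnion_le _ _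
        _ ≤ ∑' n : ℕ, ENNReal.ofReal ((a ^ (n+1) : ℝ) ^ s) * (ENNReal.ofReal ((a ^ n : ℝ) ^ (d:ℕ)) * K) := by
            rw [zero_add]; exact ENNReal.tsum_le_tsum hAn
    refine lt_of_le_of_lt key ?_
    -- now compute the geometric series
    have hterm : ∀ n : ℕ, ENNReal.ofReal ((a ^ (n+1) : ℝ) ^ s) * (ENNReal.ofReal ((a ^ n : ℝ) ^ (d:ℕ)) * K)
        = ENNReal.ofReal (a ^ s) * ((ENNReal.ofReal (a ^ (s + d))) ^ n * K) := by
      intro n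
      have h1 : ((a ^ (n+1) : ℝ)) ^ s = a ^ s * (a ^ (s * n) : ℝ) := by
        rw [← Real.rpow_natCast a (n+1), ← Real.rpow_mul ha0.le]
        rw [← Real.rpow_add ha0]
        congr 1
        push_cast; ring
      have h2 : ((a ^ n : ℝ)) ^ (d:ℕ) = (a ^ ((d:ℝ) * n) : ℝ) := by
        rw [← pow_mul, ← Real.rpow_natCast a (n * d)]
        congr 1
        push_cast; ring
      rw [h1, h2]
      rw [ENNReal.ofReal_mul (Real.rpow_nonneg ha0.le _)]
      have h3 : ENNReal.ofReal (a ^ (s * n) : ℝ) * ENNReal.ofReal (a ^ ((d:ℝ) * n) : ℝ)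
          = (ENNReal.ofReal (a ^ (s + d))) ^ n := by
        rw [← ENNReal.ofReal_mul (Real.rpow_nonneg ha0.le _), ← Real.rpow_add ha0,
          ← ENNReal.ofReal_pow (Real.rpow_nonneg ha0.le _), ← Real.rpow_natCast (a ^ (s+d)) n,
          ← Real.rpow_mul ha0.le]
        congr 2
        ring
      rw [mul_assoc, ← mul_assoc (ENNReal.ofReal (a ^ (s * n))), h3]
    rw [tsum_congr hterm, ENNReal.tsum_mul_left]
    have hρ : ENNReal.ofReal (a ^ (s + d)) < 1 := by
      rw [← ENNReal.ofReal_one]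
      exact ENNReal.ofReal_lt_ofReal_iff_of_nonneg (Real.rpow_nonneg ha0.le _) |>.mpr
        (Real.rpow_lt_one ha0.le ha1 (by linarith))
    have hsum : ∑' n : ℕ, (ENNReal.ofReal (a ^ (s + d))) ^ n * K
        = (1 - ENNReal.ofReal (a ^ (s + d)))⁻¹ * K := by
      rw [ENNReal.tsum_mul_right, ENNReal.tsum_geometric]
    rw [hsum]
    refine ENNReal.mul_lt_top ENNReal.ofReal_lt_top ?_
    refine ENNReal.mul_lt_top ?_ hKlt
    rw [ENNReal.inv_lt_top]
    exact tsub_pos_of_lt hρ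


lemma integrable_psi {r : ℝ} (hr : (d:ℝ) < r) :
    Integrable (fun z : E => Set.indicator {z : E | 1 < ‖z‖} (fun z => ‖z‖ ^ (-r)) z) := by
  have hfr : (Module.finrank ℝ E : ℝ) < r := by
    rw [finrank_euclideanSpace_fin]; exact hr
  have hint : Integrable (fun z : E => 2 ^ r * (1 + ‖z‖) ^ (-r)) volume :=
    (integrable_one_add_norm hfr).const_mul _
  refine hint.mono' ?_ ?_
  · refine (Measurable.indicator ?_ ?_).aestronglyMeasurable
    · fun_prop
    · exact measurableSet_lt measurable_const measurable_norm
  · refine Filter.Eventually.of_forall fun z => ?_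
    rw [norm_eq_abs]
    by_cases hz : z ∈ {z : E | 1 < ‖z‖}
    · rw [Set.indicator_of_mem hz]
      have h1 : (1:ℝ) < ‖z‖ := hz
      rw [abs_of_nonneg (Real.rpow_nonneg (norm_nonneg _) _)]
      have hle : (1 + ‖z‖) / 2 ≤ ‖z‖ := by linarith
      have := Real.rpow_le_rpow_of_nonpos (by positivity : (0:ℝ) < (1 + ‖z‖)/2) hle
        (by linarith : -r ≤ 0)
      refine this.trans ?_
      rw [Real.div_rpow (by positivity) (by norm_num : (0:ℝ) ≤ 2)]
      rw [Real.rpow_neg (by norm_num : (0:ℝ) ≤ 2)]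
      rw [div_eq_mul_inv, inv_inv, mul_comm]
    · rw [Set.indicator_of_notMem hz, abs_zero]
      positivity

lemma integrable_phi {s : ℝ} (hs : -(d:ℝ) < s) :
    Integrable (fun z : E => Set.indicator {z : E | ‖z‖ ≤ 1} (fun z => ‖z‖ ^ s) z) := by
  have hset : {z : E | ‖z‖ ≤ 1} = Metric.closedBall (0:E) 1 := by
    ext z; simp [mem_closedBall_zero_iff]
  rw [hset]
  constructor
  · refine (Measurable.indicator ?_ measurableSet_closedBall).aestronglyMeasurable
    fun_prop
  · rw [hasFiniteIntegral_iff_ofReal (Filter.Eventually.of_forall fun z =>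
      Set.indicator_nonneg (fun z _ => Real.rpow_nonneg (norm_nonneg _) _) z)]
    have heq : ∀ z : E, ENNReal.ofReal (Set.indicator (Metric.closedBall (0:E) 1)
        (fun z => ‖z‖ ^ s) z)
        = Set.indicator (Metric.closedBall (0:E) 1) (fun z => ENNReal.ofReal (‖z‖ ^ s)) z := by
      intro z
      by_cases hz : z ∈ Metric.closedBall (0:E) 1 <;> simp [hz]
    rw [lintegral_congr heq, lintegral_indicator measurableSet_closedBall]
    exact phi_fin hs

lemma prod_key (g h : E → ℝ) (hg : Integrable g volume) (hh : Integrable h volume) :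
    Integrable (fun p : E × E => g p.2 * h (p.1 - p.2)) ((volume : Measure E).prod volume) ∧
    ∫ p : E × E, g p.2 * h (p.1 - p.2) ∂((volume : Measure E).prod volume)
      = (∫ z : E, h z) * (∫ z : E, g z) := by
  have hτ : MeasurePreserving (fun p : E × E => (p.1 - p.2, p.2))
      ((volume : Measure E).prod volume) ((volume : Measure E).prod volume) :=
    measurePreserving_sub_prod _ _
  have hF : Integrable (fun q : E × E => h q.1 * g q.2) ((volume : Measure E).prod volume) :=
    hh.mul_prod hg
  have hcomp : (fun p : E × E => g p.2 * h (p.1 - p.2))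
      = (fun q : E × E => h q.1 * g q.2) ∘ (fun p : E × E => (p.1 - p.2, p.2)) := by
    ext p; simp [mul_comm]
  constructor
  · rw [hcomp]
    exact (hτ.integrable_comp hF.aestronglyMeasurable).mpr hF
  · rw [hcomp]
    have := hτ.map_eq
    calc ∫ p : E × E, ((fun q : E × E => h q.1 * g q.2) ∘ (fun p : E × E => (p.1 - p.2, p.2))) p
          ∂((volume : Measure E).prod volume)
        = ∫ q : E × E, h q.1 * g q.2 ∂((volume : Measure E).prod volume) := by
          rw [show ∫ p : E × E, ((fun q : E × E => h q.1 * g q.2) ∘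
              (fun p : E × E => (p.1 - p.2, p.2))) p ∂((volume : Measure E).prod volume)
            = ∫ q : E × E, h q.1 * g q.2 ∂(Measure.map (fun p : E × E => (p.1 - p.2, p.2))
              ((volume : Measure E).prod volume)) from
            (integral_map hτ.measurable.aemeasurable
              (by rw [hτ.map_eq]; exact hF.aestronglyMeasurable)).symm, hτ.map_eq]
      _ = (∫ z : E, h z) * (∫ z : E, g z) := integral_prod_mul h g

lemma prod_key' (g h : E → ℝ) (hg : Integrable g volume) (hh : Integrable h volume)
    (hev : ∀ z : E, h (-z) = h z) :
    Integrable (fun p : E × E => g p.1 * h (p.1 - p.2)) ((volume : Measure E).prod volume) ∧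
    ∫ p : E × E, g p.1 * h (p.1 - p.2) ∂((volume : Measure E).prod volume)
      = (∫ z : E, h z) * (∫ z : E, g z) := by
  obtain ⟨hi, he⟩ := prod_key g h hg hh
  have hσ : MeasurePreserving (Prod.swap : E × E → E × E)
      ((volume : Measure E).prod volume) ((volume : Measure E).prod volume) :=
    Measure.measurePreserving_swap
  have hcomp : (fun p : E × E => g p.1 * h (p.1 - p.2))
      = (fun q : E × E => g q.2 * h (q.1 - q.2)) ∘ (Prod.swap : E × E → E × E) := by
    ext p
    simp only [Function.comp_apply, Prod.snd_swap, Prod.fst_swap]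
    rw [show p.2 - p.1 = -(p.1 - p.2) from (neg_sub _ _).symm, hev]
  constructor
  · rw [hcomp]
    exact (hσ.integrable_comp hi.aestronglyMeasurable).mpr hi
  · rw [hcomp]
    rw [show ∫ p : E × E, ((fun q : E × E => g q.2 * h (q.1 - q.2)) ∘ Prod.swap) p
          ∂((volume : Measure E).prod volume)
        = ∫ q : E × E, g q.2 * h (q.1 - q.2) ∂(Measure.map (Prod.swap : E × E → E × E)
          ((volume : Measure E).prod volume)) from
      (integral_map hσ.measurable.aemeasurable
        (by rw [hσ.map_eq]; exact hi.aestronglyMeasurable)).symm, hσ.map_eq]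
    exact he

lemma lip_g {k : ℝ} (hk0 : 0 < k) (hk1 : k ≤ 1) :
    LipschitzWith 1 (fun t : ℝ => (1 + t ^ 2) ^ (k / 2)) := by
  have hdiff : ∀ t : ℝ, HasDerivAt (fun t : ℝ => (1 + t ^ 2) ^ (k / 2))
      (2 * t * (k / 2) * (1 + t ^ 2) ^ (k / 2 - 1)) t := by
    intro t
    have h1 : HasDerivAt (fun t : ℝ => 1 + t ^ 2) (2 * t) t := by
      simpa using ((hasDerivAt_pow 2 t).const_add 1)
    exact h1.rpow_const (Or.inl (by positivity))
  apply lipschitzWith_of_nnnorm_deriv_le (fun t => (hdiff t).differentiableAt)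
  intro t
  rw [(hdiff t).deriv]
  rw [← NNReal.coe_le_coe]
  push_cast
  rw [norm_eq_abs]
  have hA : (0:ℝ) < 1 + t ^ 2 := by positivity
  have hA1 : (1:ℝ) ≤ 1 + t ^ 2 := by nlinarith
  have h2 : (1 + t ^ 2) ^ (k / 2 - 1) ≤ (1 + t ^ 2) ^ (-(1/2) : ℝ) :=
    Real.rpow_le_rpow_of_exponent_le hA1 (by linarith)
  have h3 : |t| ≤ (1 + t ^ 2) ^ ((1:ℝ)/2) := by
    rw [← Real.sqrt_eq_rpow]
    rw [show |t| = Real.sqrt (t ^ 2) by rw [Real.sqrt_sq_eq_abs]]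
    exact Real.sqrt_le_sqrt (by nlinarith)
  have habs : |2 * t * (k / 2) * (1 + t ^ 2) ^ (k / 2 - 1)|
      = k * (|t| * (1 + t ^ 2) ^ (k / 2 - 1)) := by
    rw [abs_mul, abs_mul, abs_mul, abs_of_nonneg (by positivity : (0:ℝ) ≤ k/2),
      abs_of_nonneg (Real.rpow_nonneg hA.le _), abs_of_nonneg (by norm_num : (0:ℝ) ≤ 2)]
    ring
  rw [habs]
  have h4 : |t| * (1 + t ^ 2) ^ (k / 2 - 1) ≤ (1 + t ^ 2) ^ ((1:ℝ)/2) * (1 + t ^ 2) ^ (-(1/2) : ℝ) :=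
    mul_le_mul h3 h2 (Real.rpow_nonneg hA.le _) (Real.rpow_nonneg hA.le _)
  rw [← Real.rpow_add hA] at h4
  norm_num at h4
  nlinarith [abs_nonneg t, Real.rpow_nonneg hA.le (k/2-1)]

lemma m_lip {k : ℝ} (hk0 : 0 < k) (hk1 : k ≤ 1) (x y : E) :
    |(1 + ‖x‖ ^ 2) ^ (k / 2) - (1 + ‖y‖ ^ 2) ^ (k / 2)| ≤ ‖x - y‖ := by
  have h := (lip_g hk0 hk1).comp (lipschitzWith_one_norm : LipschitzWith 1 (norm : E → ℝ))
  have h2 := h.dist_le_mul x y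
  simp only [Function.comp, Real.dist_eq, dist_eq_norm, mul_one, NNReal.coe_mul,
    NNReal.coe_one, one_mul] at h2
  exact h2

end AuxStmt17

set_option maxHeartbeats 2000000 in
theorem stmt17 (d : ℕ) (hd : 1 ≤ d) (α : ℝ) (hα : α ∈ Set.Ioo (0:ℝ) 2)
    (k₀ : ℝ) (hk₀ : k₀ ∈ Set.Ioo (0:ℝ) 1) :
    ∃ C > (0 : ℝ), ∀ f : EuclideanSpace ℝ (Fin d) → ℝ, Measurable f →
      IntegrableOn
        (fun p : EuclideanSpace ℝ (Fin d) × EuclideanSpace ℝ (Fin d) =>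
          (f p.1 - f p.2) ^ 2 / ‖p.1 - p.2‖ ^ ((d : ℝ) + α) * (1 + ‖p.1‖ ^ 2) ^ k₀)
        {p : EuclideanSpace ℝ (Fin d) × EuclideanSpace ℝ (Fin d) | ‖p.1 - p.2‖ ≤ 1} →
      Integrable
        (fun p : EuclideanSpace ℝ (Fin d) × EuclideanSpace ℝ (Fin d) =>
          (f p.1 * (1 + ‖p.1‖ ^ 2) ^ (k₀ / 2) - f p.2 * (1 + ‖p.2‖ ^ 2) ^ (k₀ / 2)) ^ 2 /
            ‖p.1 - p.2‖ ^ ((d : ℝ) + α)) →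
      Integrable (fun x : EuclideanSpace ℝ (Fin d) => f x ^ 2 * (1 + ‖x‖ ^ 2) ^ k₀) →
      (∫ x : EuclideanSpace ℝ (Fin d),
          (∫ y in {y : EuclideanSpace ℝ (Fin d) | ‖x - y‖ ≤ 1},
            (f x - f y) ^ 2 / ‖x - y‖ ^ ((d : ℝ) + α)) * (1 + ‖x‖ ^ 2) ^ k₀) ≥
        (1 / 2 : ℝ) * (∫ x : EuclideanSpace ℝ (Fin d), ∫ y : EuclideanSpace ℝ (Fin d),
            (f x * (1 + ‖x‖ ^ 2) ^ (k₀ / 2) - f y * (1 + ‖y‖ ^ 2) ^ (k₀ / 2)) ^ 2 /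
              ‖x - y‖ ^ ((d : ℝ) + α)) -
          C * ∫ x : EuclideanSpace ℝ (Fin d), f x ^ 2 * (1 + ‖x‖ ^ 2) ^ k₀ := by
  classical
  obtain ⟨hα0, hα2⟩ := hα
  obtain ⟨hk0, hk1⟩ := hk₀
  set r : ℝ := (d : ℝ) + α with hrdef
  set ψ : (EuclideanSpace ℝ (Fin d)) → ℝ := fun z => Set.indicator {z : (EuclideanSpace ℝ (Fin d)) | 1 < ‖z‖} (fun z => ‖z‖ ^ (-r)) z with hψdef
  set φ : (EuclideanSpace ℝ (Fin d)) → ℝ := fun z => Set.indicator {z : (EuclideanSpace ℝ (Fin d)) | ‖z‖ ≤ 1} (fun z => ‖z‖ ^ (2 - r)) z with hφdef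
  have hψint : Integrable ψ volume := integrable_psi (by rw [hrdef]; linarith)
  have hφint : Integrable φ volume := integrable_phi (by rw [hrdef]; push_cast; linarith)
  have hψnn : ∀ z : (EuclideanSpace ℝ (Fin d)), 0 ≤ ψ z := fun z =>
    Set.indicator_nonneg (fun z _ => Real.rpow_nonneg (norm_nonneg _) _) z
  have hφnn : ∀ z : (EuclideanSpace ℝ (Fin d)), 0 ≤ φ z := fun z =>
    Set.indicator_nonneg (fun z _ => Real.rpow_nonneg (norm_nonneg _) _) z
  have Jψ0 : 0 ≤ ∫ z : (EuclideanSpace ℝ (Fin d)), ψ z := integral_nonneg hψnn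
  have Jφ0 : 0 ≤ ∫ z : (EuclideanSpace ℝ (Fin d)), φ z := integral_nonneg hφnn
  refine ⟨2 * (∫ z : (EuclideanSpace ℝ (Fin d)), ψ z) + (∫ z : (EuclideanSpace ℝ (Fin d)), φ z) + 1, by linarith, ?_⟩
  intro f hf h1 h2 h3
  set S : Set ((EuclideanSpace ℝ (Fin d)) × (EuclideanSpace ℝ (Fin d))) := {p : (EuclideanSpace ℝ (Fin d)) × (EuclideanSpace ℝ (Fin d)) | ‖p.1 - p.2‖ ≤ 1} with hSdef
  have hS : MeasurableSet S :=
    measurableSet_le ((continuous_fst.sub continuous_snd).norm.measurable) measurable_const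
  have hw1 : ∀ x : (EuclideanSpace ℝ (Fin d)), (1:ℝ) ≤ (1 + ‖x‖ ^ 2) ^ k₀ := fun x => by
    calc (1:ℝ) = 1 ^ k₀ := (Real.one_rpow _).symm
      _ ≤ (1 + ‖x‖ ^ 2) ^ k₀ :=
        Real.rpow_le_rpow (by norm_num) (by nlinarith [sq_nonneg ‖x‖]) hk0.le
  have hwnn : ∀ x : (EuclideanSpace ℝ (Fin d)), (0:ℝ) ≤ (1 + ‖x‖ ^ 2) ^ k₀ := fun x => le_trans zero_le_one (hw1 x)
  have hmsq : ∀ x : (EuclideanSpace ℝ (Fin d)), ((1 + ‖x‖ ^ 2) ^ (k₀ / 2)) ^ 2 = (1 + ‖x‖ ^ 2) ^ k₀ := fun x => by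
    rw [← Real.rpow_natCast ((1 + ‖x‖ ^ 2) ^ (k₀ / 2)) 2, ← Real.rpow_mul (by positivity)]
    norm_num
  set G : (EuclideanSpace ℝ (Fin d)) × (EuclideanSpace ℝ (Fin d)) → ℝ :=
    fun p => (f p.1 - f p.2) ^ 2 / ‖p.1 - p.2‖ ^ r * (1 + ‖p.1‖ ^ 2) ^ k₀ with hGdef
  set H : (EuclideanSpace ℝ (Fin d)) × (EuclideanSpace ℝ (Fin d)) → ℝ := fun p =>
    (f p.1 * (1 + ‖p.1‖ ^ 2) ^ (k₀ / 2) - f p.2 * (1 + ‖p.2‖ ^ 2) ^ (k₀ / 2)) ^ 2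
      / ‖p.1 - p.2‖ ^ r with hHdef
  set F : (EuclideanSpace ℝ (Fin d)) → ℝ := fun x => f x ^ 2 * (1 + ‖x‖ ^ 2) ^ k₀ with hFdef
  have hvol : (volume : Measure ((EuclideanSpace ℝ (Fin d)) × (EuclideanSpace ℝ (Fin d)))) = (volume : Measure (EuclideanSpace ℝ (Fin d))).prod volume :=
    Measure.volume_eq_prod _ _
  have hH_int : Integrable H ((volume : Measure (EuclideanSpace ℝ (Fin d))).prod volume) := by rw [← hvol]; exact h2
  have hG_ind : Integrable (S.indicator G) ((volume : Measure (EuclideanSpace ℝ (Fin d))).prod volume) := by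
    rw [← hvol]; exact (integrable_indicator_iff hS).2 h1
  have hF_int : Integrable F volume := h3
  have hf2_int : Integrable (fun x : (EuclideanSpace ℝ (Fin d)) => f x ^ 2) volume := by
    refine hF_int.mono' ((hf.pow_const 2).aestronglyMeasurable)
      (Filter.Eventually.of_forall fun x => ?_)
    rw [norm_eq_abs, abs_of_nonneg (sq_nonneg _)]
    exact le_mul_of_one_le_right (sq_nonneg _) (hw1 x)
  have hψeven : ∀ z : (EuclideanSpace ℝ (Fin d)), ψ (-z) = ψ z := fun z => by
    simp only [hψdef, Set.indicator_apply, mem_setOf_eq, norm_neg]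
  obtain ⟨hR1int, hR1val⟩ := prod_key' F ψ hF_int hψint hψeven
  obtain ⟨hR2int, hR2val⟩ := prod_key F ψ hF_int hψint
  obtain ⟨hR3int, hR3val⟩ := prod_key (fun x : (EuclideanSpace ℝ (Fin d)) => f x ^ 2) φ hf2_int hφint
  set RHS : (EuclideanSpace ℝ (Fin d)) × (EuclideanSpace ℝ (Fin d)) → ℝ := fun p => 2 * S.indicator G p +
    (2 * (F p.1 * ψ (p.1 - p.2)) + 2 * (F p.2 * ψ (p.1 - p.2)) +
      2 * (f p.2 ^ 2 * φ (p.1 - p.2))) with hRHSdef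
  have hA1 : Integrable (fun p : (EuclideanSpace ℝ (Fin d)) × (EuclideanSpace ℝ (Fin d)) =>
      2 * S.indicator G p) ((volume : Measure (EuclideanSpace ℝ (Fin d))).prod volume) :=
    hG_ind.const_mul 2
  have hB1 : Integrable (fun p : (EuclideanSpace ℝ (Fin d)) × (EuclideanSpace ℝ (Fin d)) =>
      2 * (F p.1 * ψ (p.1 - p.2))) ((volume : Measure (EuclideanSpace ℝ (Fin d))).prod volume) :=
    hR1int.const_mul 2
  have hB2 : Integrable (fun p : (EuclideanSpace ℝ (Fin d)) × (EuclideanSpace ℝ (Fin d)) =>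
      2 * (F p.2 * ψ (p.1 - p.2))) ((volume : Measure (EuclideanSpace ℝ (Fin d))).prod volume) :=
    hR2int.const_mul 2
  have hB3 : Integrable (fun p : (EuclideanSpace ℝ (Fin d)) × (EuclideanSpace ℝ (Fin d)) =>
      2 * (f p.2 ^ 2 * φ (p.1 - p.2))) ((volume : Measure (EuclideanSpace ℝ (Fin d))).prod volume) :=
    hR3int.const_mul 2
  have hB12 : Integrable (fun p : (EuclideanSpace ℝ (Fin d)) × (EuclideanSpace ℝ (Fin d)) =>
      2 * (F p.1 * ψ (p.1 - p.2)) + 2 * (F p.2 * ψ (p.1 - p.2)))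
      ((volume : Measure (EuclideanSpace ℝ (Fin d))).prod volume) := hB1.add hB2
  have hB123 : Integrable (fun p : (EuclideanSpace ℝ (Fin d)) × (EuclideanSpace ℝ (Fin d)) =>
      2 * (F p.1 * ψ (p.1 - p.2)) + 2 * (F p.2 * ψ (p.1 - p.2)) + 2 * (f p.2 ^ 2 * φ (p.1 - p.2)))
      ((volume : Measure (EuclideanSpace ℝ (Fin d))).prod volume) := hB12.add hB3
  have hRHSint : Integrable RHS ((volume : Measure (EuclideanSpace ℝ (Fin d))).prod volume) :=
    hA1.add hB123
  -- pointwise bound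
  have hpt : ∀ p : (EuclideanSpace ℝ (Fin d)) × (EuclideanSpace ℝ (Fin d)), H p ≤ RHS p := by
    rintro ⟨x, y⟩
    simp only [hRHSdef, hHdef, hGdef, hFdef]
    obtain ⟨u, hu⟩ : ∃ u, (1 + ‖x‖ ^ 2) ^ (k₀ / 2) = u := ⟨_, rfl⟩
    obtain ⟨v, hv⟩ : ∃ v, (1 + ‖y‖ ^ 2) ^ (k₀ / 2) = v := ⟨_, rfl⟩
    obtain ⟨w, hw⟩ : ∃ w, (1 + ‖x‖ ^ 2) ^ k₀ = w := ⟨_, rfl⟩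
    obtain ⟨w', hw'⟩ : ∃ w', (1 + ‖y‖ ^ 2) ^ k₀ = w' := ⟨_, rfl⟩
    have huw : u ^ 2 = w := by rw [← hu, ← hw]; exact hmsq x
    have hvw : v ^ 2 = w' := by rw [← hv, ← hw']; exact hmsq y
    obtain ⟨n2, hn2⟩ : ∃ n2, ‖x - y‖ ^ 2 = n2 := ⟨_, rfl⟩
    have hlipuv : (u - v) ^ 2 ≤ n2 := by
      rw [← hu, ← hv, ← hn2]
      have h := m_lip hk0 hk1.le x y
      nlinarith [abs_nonneg ((1 + ‖x‖ ^ 2) ^ (k₀ / 2) - (1 + ‖y‖ ^ 2) ^ (k₀ / 2)),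
        sq_abs ((1 + ‖x‖ ^ 2) ^ (k₀ / 2) - (1 + ‖y‖ ^ 2) ^ (k₀ / 2))]
    rw [hu, hv, hw, hw']
    by_cases hxy : ‖x - y‖ ≤ 1
    · have hmem : (x, y) ∈ S := hxy
      rw [Set.indicator_of_mem hmem]
      simp only [hGdef, hu, hw]
      have hψz : ψ (x - y) = 0 := Set.indicator_of_notMem (by simpa using hxy) _
      have hφz : φ (x - y) = ‖x - y‖ ^ (2 - r) :=
        Set.indicator_of_mem (show (x - y) ∈ {z : (EuclideanSpace ℝ (Fin d)) | ‖z‖ ≤ 1} from hxy) _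
      rw [hψz, hφz]
      rcases (norm_nonneg (x - y)).eq_or_lt with h0 | h0
      · have hxy0 : x = y := sub_eq_zero.mp (norm_eq_zero.mp h0.symm)
        have huv : u = v := by rw [← hu, ← hv, hxy0]
        subst hxy0
        subst huv
        have hQ0 : 0 ≤ ‖x - x‖ ^ (2 - r) := Real.rpow_nonneg (norm_nonneg _) _
        have hD0 : 0 ≤ ‖x - x‖ ^ r := Real.rpow_nonneg (norm_nonneg _) _
        have hw0 : 0 ≤ w := hw ▸ hwnn x
        have hLHS0 : (f x * u - f x * u) ^ 2 / ‖x - x‖ ^ r = 0 := by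
          rw [sub_self]
          simp
        rw [hLHS0]
        have t1 : 0 ≤ (f x - f x) ^ 2 / ‖x - x‖ ^ r * w :=
          mul_nonneg (div_nonneg (sq_nonneg _) hD0) hw0
        have t2 : 0 ≤ f x ^ 2 * ‖x - x‖ ^ (2 - r) := mul_nonneg (sq_nonneg _) hQ0
        nlinarith [t1, t2]
      · obtain ⟨D, hD⟩ : ∃ D, ‖x - y‖ ^ r = D := ⟨_, rfl⟩
        have hDpos : (0:ℝ) < D := hD ▸ Real.rpow_pos_of_pos h0 _
        obtain ⟨Q, hQ⟩ : ∃ Q, ‖x - y‖ ^ (2 - r) = Q := ⟨_, rfl⟩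
        have hQD : Q * D = n2 := by
          rw [← hQ, ← hD, ← hn2, ← Real.rpow_add h0, ← Real.rpow_two]
          norm_num
        rw [hD, hQ]
        have hQval : Q = n2 / D := (eq_div_iff hDpos.ne').mpr hQD
        have hnum : (f x * u - f y * v) ^ 2
            ≤ 2 * ((f x - f y) ^ 2 * w) + 2 * (f y ^ 2 * n2) := by
          nlinarith [sq_nonneg ((f x - f y) * u - f y * (u - v)), sq_nonneg (f y), hlipuv, huw]
        calc (f x * u - f y * v) ^ 2 / D
            ≤ (2 * ((f x - f y) ^ 2 * w) + 2 * (f y ^ 2 * n2)) / D :=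
              (div_le_div_iff_of_pos_right hDpos).mpr hnum
          _ = 2 * ((f x - f y) ^ 2 / D * w) +
              (2 * (f x ^ 2 * w * 0) + 2 * (f y ^ 2 * w' * 0) + 2 * (f y ^ 2 * Q)) := by
              rw [hQval]; ring
    · have hmem : (x, y) ∉ S := hxy
      rw [Set.indicator_of_notMem hmem]
      have h1z : (1:ℝ) < ‖x - y‖ := not_le.mp hxy
      have h0 : (0:ℝ) < ‖x - y‖ := lt_trans one_pos h1z
      have hψz : ψ (x - y) = ‖x - y‖ ^ (-r) :=
        Set.indicator_of_mem (show (x - y) ∈ {z : (EuclideanSpace ℝ (Fin d)) | 1 < ‖z‖} from h1z) _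
      have hφz : φ (x - y) = 0 := Set.indicator_of_notMem (by simpa using hxy) _
      rw [hψz, hφz]
      obtain ⟨D, hD⟩ : ∃ D, ‖x - y‖ ^ r = D := ⟨_, rfl⟩
      have hDpos : (0:ℝ) < D := hD ▸ Real.rpow_pos_of_pos h0 _
      have hψval : ‖x - y‖ ^ (-r) = D⁻¹ := by
        rw [Real.rpow_neg (norm_nonneg _), hD]
      rw [hψval, hD]
      have hnum : (f x * u - f y * v) ^ 2 ≤ 2 * (f x ^ 2 * w) + 2 * (f y ^ 2 * w') := by
        nlinarith [sq_nonneg (f x * u + f y * v), huw, hvw]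
      calc (f x * u - f y * v) ^ 2 / D
          ≤ (2 * (f x ^ 2 * w) + 2 * (f y ^ 2 * w')) / D :=
            (div_le_div_iff_of_pos_right hDpos).mpr hnum
        _ = 2 * 0 + (2 * (f x ^ 2 * w * D⁻¹) + 2 * (f y ^ 2 * w' * D⁻¹) +
            2 * (f y ^ 2 * 0)) := by ring
  have hkey : ∫ p : (EuclideanSpace ℝ (Fin d)) × (EuclideanSpace ℝ (Fin d)), H p
        ∂((volume : Measure (EuclideanSpace ℝ (Fin d))).prod volume)
      ≤ ∫ p : (EuclideanSpace ℝ (Fin d)) × (EuclideanSpace ℝ (Fin d)), RHS p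
        ∂((volume : Measure (EuclideanSpace ℝ (Fin d))).prod volume) :=
    integral_mono hH_int hRHSint hpt
  have hRHSval : ∫ p : (EuclideanSpace ℝ (Fin d)) × (EuclideanSpace ℝ (Fin d)), RHS p
        ∂((volume : Measure (EuclideanSpace ℝ (Fin d))).prod volume)
      = 2 * (∫ p : (EuclideanSpace ℝ (Fin d)) × (EuclideanSpace ℝ (Fin d)), S.indicator G p
          ∂((volume : Measure (EuclideanSpace ℝ (Fin d))).prod volume))
        + (2 * ((∫ z : (EuclideanSpace ℝ (Fin d)), ψ z) * (∫ z : (EuclideanSpace ℝ (Fin d)), F z))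
          + 2 * ((∫ z : (EuclideanSpace ℝ (Fin d)), ψ z) * (∫ z : (EuclideanSpace ℝ (Fin d)), F z))
          + 2 * ((∫ z : (EuclideanSpace ℝ (Fin d)), φ z) * (∫ z : (EuclideanSpace ℝ (Fin d)), f z ^ 2))) := by
    rw [hRHSdef]
    rw [integral_add hA1 hB123, integral_add hB12 hB3, integral_add hB1 hB2,
      integral_const_mul, integral_const_mul, integral_const_mul, integral_const_mul,
      hR1val, hR2val, hR3val]
  have hN2 : (∫ x : (EuclideanSpace ℝ (Fin d)), f x ^ 2) ≤ ∫ x : (EuclideanSpace ℝ (Fin d)), F x :=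
    integral_mono hf2_int hF_int (fun x => le_mul_of_one_le_right (sq_nonneg _) (hw1 x))
  have hN0 : 0 ≤ ∫ x : (EuclideanSpace ℝ (Fin d)), F x :=
    integral_nonneg fun x => mul_nonneg (sq_nonneg _) (hwnn x)
  have hN20 : 0 ≤ ∫ x : (EuclideanSpace ℝ (Fin d)), f x ^ 2 :=
    integral_nonneg fun x => sq_nonneg _
  -- convert the iterated integrals
  have hIdbl : (∫ x : (EuclideanSpace ℝ (Fin d)), ∫ y : (EuclideanSpace ℝ (Fin d)),
        (f x * (1 + ‖x‖ ^ 2) ^ (k₀ / 2) - f y * (1 + ‖y‖ ^ 2) ^ (k₀ / 2)) ^ 2 / ‖x - y‖ ^ r)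
      = ∫ p : (EuclideanSpace ℝ (Fin d)) × (EuclideanSpace ℝ (Fin d)), H p
        ∂((volume : Measure (EuclideanSpace ℝ (Fin d))).prod volume) := by
    exact integral_integral hH_int
  have hLHSstep : ∀ x : (EuclideanSpace ℝ (Fin d)),
      (∫ y in {y : (EuclideanSpace ℝ (Fin d)) | ‖x - y‖ ≤ 1},
        (f x - f y) ^ 2 / ‖x - y‖ ^ r) * (1 + ‖x‖ ^ 2) ^ k₀
      = ∫ y : (EuclideanSpace ℝ (Fin d)), S.indicator G (x, y) := by
    intro x
    have hAx : MeasurableSet {y : (EuclideanSpace ℝ (Fin d)) | ‖x - y‖ ≤ 1} :=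
      measurableSet_le ((continuous_const.sub continuous_id).norm.measurable) measurable_const
    rw [← integral_mul_const]
    rw [← integral_indicator hAx]
    congr 1
  have hLHS : (∫ x : (EuclideanSpace ℝ (Fin d)),
        (∫ y in {y : (EuclideanSpace ℝ (Fin d)) | ‖x - y‖ ≤ 1},
          (f x - f y) ^ 2 / ‖x - y‖ ^ r) * (1 + ‖x‖ ^ 2) ^ k₀)
      = ∫ p : (EuclideanSpace ℝ (Fin d)) × (EuclideanSpace ℝ (Fin d)), S.indicator G p
        ∂((volume : Measure (EuclideanSpace ℝ (Fin d))).prod volume) := by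
    rw [integral_congr_ae (Filter.Eventually.of_forall hLHSstep)]
    exact integral_integral hG_ind
  rw [ge_iff_le, hLHS, hIdbl]
  have hmulψ : 0 ≤ (∫ z : (EuclideanSpace ℝ (Fin d)), ψ z) * (∫ z : (EuclideanSpace ℝ (Fin d)), F z) :=
    mul_nonneg Jψ0 hN0
  have hmulφ : (∫ z : (EuclideanSpace ℝ (Fin d)), φ z) * (∫ x : (EuclideanSpace ℝ (Fin d)), f x ^ 2)
      ≤ (∫ z : (EuclideanSpace ℝ (Fin d)), φ z) * (∫ x : (EuclideanSpace ℝ (Fin d)), F x) :=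
    mul_le_mul_of_nonneg_left hN2 Jφ0
  linarith [hkey, hRHSval]
end
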